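/- Let F_q be a finite field, m ≥ 1, and let Y range over m×m matrices over F_q subject to a staircase zero pattern: Y_{ij} = 0 whenever j < c_i − (i−1), for fixed pivots 1 ≤ c₁ < … < c_m ≤ 2m. Then the number of nonsingular such matrices Y equals (q−1)^m · q^{binom(m,2)} · ∏_{j=1}^m [r_j − (j−1)]_q, where r_j = #{i : c_i ≤ i + j − 1} and [n]_q = 1 + q + … + q^{n−1}. -/

import Mathlib

open Finset Submodule


lemma count_indep (F : Type*) [Field F] [Fintype F] (V : Type*) [AddCommGroup V]
    [Module F V] [Fintype V] :
    ∀ (n : ℕ) (W : Fin n → Submodule F V), Monotone W →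
    Nat.card {v : Fin n → V // (∀ j, v j ∈ W j) ∧ LinearIndependent F v} =
      ∏ j : Fin n, (Nat.card (W j) - Fintype.card F ^ (j : ℕ)) := by
  intro n
  induction n with
  | zero =>
    intro W _
    have e : {v : Fin 0 → V // (∀ j, v j ∈ W j) ∧ LinearIndependent F v} ≃ (Fin 0 → V) :=
      Equiv.subtypeUnivEquiv fun v => ⟨fun j => j.elim0, linearIndependent_empty_type⟩
    rw [Nat.card_congr e]
    simp
  | succ n ih =>
    intro W hW
    classical
    set Wl := W (Fin.last n) with hWl
    have e : {v : Fin (n + 1) → V // (∀ j, v j ∈ W j) ∧ LinearIndependent F v} ≃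
        Σ u : {u : Fin n → V // (∀ j, u j ∈ W j.castSucc) ∧ LinearIndependent F u},
          {x : V // x ∈ Wl ∧ x ∉ span F (Set.range u.1)} := by
      refine ⟨fun v => ⟨⟨Fin.init v.1, fun j => v.2.1 j.castSucc,
          (linearIndependent_fin_succ'.1 v.2.2).1⟩,
          ⟨v.1 (Fin.last n), v.2.1 (Fin.last n),
          (linearIndependent_fin_succ'.1 v.2.2).2⟩⟩,
        fun p => ⟨Fin.snoc p.1.1 p.2.1, ?_, ?_⟩, ?_, ?_⟩
      · intro j
        refine Fin.lastCases ?_ ?_ j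
        · simpa using p.2.2.1
        · intro k; simpa using p.1.2.1 k
      · rw [linearIndependent_fin_snoc]
        exact ⟨p.1.2.2, p.2.2.2⟩
      · intro v
        ext j
        simp [Fin.snoc_init_self]
      · rintro ⟨⟨u, hu⟩, ⟨x, hx⟩⟩
        refine Sigma.ext (Subtype.ext (funext fun j => by simp))
          ((Subtype.heq_iff_coe_eq fun y => by simp).2 (by simp))
    rw [Nat.card_congr e, Nat.card_eq_fintype_card, Fintype.card_sigma]
    have hconst : ∀ u : {u : Fin n → V // (∀ j, u j ∈ W j.castSucc) ∧ LinearIndependent F u},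
        Fintype.card {x : V // x ∈ Wl ∧ x ∉ span F (Set.range u.1)} =
          Nat.card Wl - Fintype.card F ^ n := by
      intro u
      have hsub : span F (Set.range u.1) ≤ Wl := by
        rw [span_le]
        rintro - ⟨j, rfl⟩
        exact hW (Fin.le_last j.castSucc) (u.2.1 j)
      have e2 : {x : V // x ∈ Wl ∧ x ∉ span F (Set.range u.1)} ≃
          ((Wl : Set V) \ (span F (Set.range u.1) : Set V) : Set V) :=
        Equiv.subtypeEquivRight fun x => by simp [Set.mem_diff]
      rw [← Nat.card_eq_fintype_card, Nat.card_congr e2, Nat.card_coe_set_eq,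
        Set.ncard_diff hsub (Set.toFinite _), ← Nat.card_coe_set_eq,
        ← Nat.card_coe_set_eq]
      simp only [SetLike.coe_sort_coe]
      congr 1
      rw [Nat.card_eq_fintype_card, Module.card_eq_pow_finrank (K := F),
        finrank_span_eq_card u.2.2, Fintype.card_fin]
    simp_rw [hconst]
    rw [Finset.sum_const, Finset.card_univ, ← Nat.card_eq_fintype_card,
      ih (fun j => W j.castSucc) (fun a b hab => hW (by simpa using hab)),
      Fin.prod_univ_castSucc]
    simp [smul_eq_mul, mul_comm, hWl]


lemma geo_aux (q : ℕ) (hq : 1 ≤ q) : ∀ k, (q - 1) * ∑ t ∈ Finset.range k, q ^ t = q ^ k - 1 := by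
  intro k
  induction k with
  | zero => simp
  | succ k ih =>
    rw [Finset.sum_range_succ, Nat.mul_add, ih, Nat.sub_mul, one_mul, pow_succ]
    have h1 : 1 ≤ q ^ k := Nat.one_le_pow _ _ (by omega)
    have h2 : q ^ k ≤ q ^ k * q := Nat.le_mul_of_pos_right _ (by omega)
    have h3 : q * q ^ k = q ^ k * q := mul_comm _ _
    omega

lemma factor_aux (q : ℕ) (hq : 1 ≤ q) (r j : ℕ) :
    q ^ r - q ^ j = (q - 1) * q ^ j * ∑ t ∈ Finset.range (r - j), q ^ t := by
  by_cases h : j ≤ r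
  · rw [mul_assoc, mul_comm (q ^ j), ← mul_assoc, geo_aux q hq, Nat.sub_mul, one_mul,
      ← pow_add, Nat.sub_add_cancel h]
  · have h1 : q ^ r - q ^ j = 0 :=
      Nat.sub_eq_zero_of_le (Nat.pow_le_pow_right hq (le_of_not_ge h))
    have h2 : r - j = 0 := Nat.sub_eq_zero_of_le (le_of_not_ge h)
    rw [h1, h2]
    simp



/-- For pivots `c₀ < ⋯ < c_{m-1}` in `{0, …, 2m-1}` (0-indexed form of
`1 ≤ c₁ < ⋯ < c_m ≤ 2m`), the number of nonsingular `m × m` matrices `Y` over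
`F_q` with `Y i j = 0` whenever `j + i < c i` (0-indexed form of
`j < c_i - (i-1)`) equals `(q-1)^m q^{m(m-1)/2} ∏_j [r_j - j]_q`, where
`r_j = #{i : c_i ≤ i + j}`. -/
theorem card_nonsingular_staircase_matrices (F : Type*) [Field F] [Fintype F]
    (m : ℕ) (hm : 1 ≤ m) (c : Fin m → Fin (2 * m)) (hc : StrictMono c) :
    Nat.card {Y : Matrix (Fin m) (Fin m) F //
        (∀ i j : Fin m, (j : ℕ) + (i : ℕ) < (c i : ℕ) → Y i j = 0) ∧ IsUnit Y.det} =
      (Fintype.card F - 1) ^ m * Fintype.card F ^ (m * (m - 1) / 2) *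
        ∏ j : Fin m,
          ∑ t ∈ Finset.range
            ((Finset.univ.filter fun i : Fin m => (c i : ℕ) ≤ (i : ℕ) + (j : ℕ)).card - (j : ℕ)),
            Fintype.card F ^ t := by
  classical
  set q := Fintype.card F with hqdef
  have hq : 1 ≤ q := Fintype.card_pos
  let W : Fin m → Submodule F (Fin m → F) := fun j =>
    { carrier := {v | ∀ i : Fin m, (j : ℕ) + (i : ℕ) < (c i : ℕ) → v i = 0}
      add_mem' := fun ha hb i h => by
        simp only [Set.mem_setOf_eq] at ha hb
        simp [Pi.add_apply, ha i h, hb i h]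
      zero_mem' := fun i h => rfl
      smul_mem' := fun r a ha i h => by
        simp only [Set.mem_setOf_eq] at ha
        simp [Pi.smul_apply, ha i h] }
  have hWmem : ∀ (j : Fin m) (v : Fin m → F),
      v ∈ W j ↔ ∀ i : Fin m, (j : ℕ) + (i : ℕ) < (c i : ℕ) → v i = 0 := fun _ _ => Iff.rfl
  have hmono : Monotone W := by
    intro j k hjk v hv i h
    have hjk' : (j : ℕ) ≤ (k : ℕ) := hjk
    exact hv i (by omega)
  have e : {Y : Matrix (Fin m) (Fin m) F //
        (∀ i j : Fin m, (j : ℕ) + (i : ℕ) < (c i : ℕ) → Y i j = 0) ∧ IsUnit Y.det} ≃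
      {v : Fin m → (Fin m → F) // (∀ j, v j ∈ W j) ∧ LinearIndependent F v} := by
    refine ⟨fun Y => ⟨fun j i => Y.1 i j, fun j i h => Y.2.1 i j h, ?_⟩,
      fun v => ⟨Matrix.of fun i j => v.1 j i, fun i j h => v.2.1 j i h, ?_⟩,
      fun Y => rfl, fun v => rfl⟩
    · exact Matrix.linearIndependent_cols_iff_isUnit.2
        ((Matrix.isUnit_iff_isUnit_det _).2 Y.2.2)
    · exact (Matrix.isUnit_iff_isUnit_det _).1
        (Matrix.linearIndependent_cols_iff_isUnit.1 v.2.2)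
  rw [Nat.card_congr e, count_indep F (Fin m → F) m W hmono]
  have hcard : ∀ j : Fin m, Nat.card (W j) =
      q ^ (Finset.univ.filter fun i : Fin m => (c i : ℕ) ≤ (i : ℕ) + (j : ℕ)).card := by
    intro j
    have e2 : W j ≃ ({i : Fin m // (c i : ℕ) ≤ (i : ℕ) + (j : ℕ)} → F) := by
      refine ⟨fun v i0 => v.1 i0.1,
        fun f => ⟨fun i => if h : (c i : ℕ) ≤ (i : ℕ) + (j : ℕ) then f ⟨i, h⟩ else 0,
          fun i h => dif_neg (by omega)⟩, ?_, ?_⟩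
      · intro v
        ext i
        by_cases h : (c i : ℕ) ≤ (i : ℕ) + (j : ℕ)
        · simp [h]
        · simp only [dif_neg h]
          exact (v.2 i (by omega)).symm
      · intro f
        ext i0
        simp [i0.2]
    rw [Nat.card_congr e2, Nat.card_eq_fintype_card, Fintype.card_fun, Fintype.card_subtype]
  calc ∏ j : Fin m, (Nat.card (W j) - q ^ (j : ℕ))
      = ∏ j : Fin m, ((q - 1) * q ^ (j : ℕ) *
          ∑ t ∈ Finset.range
            ((Finset.univ.filter fun i : Fin m => (c i : ℕ) ≤ (i : ℕ) + (j : ℕ)).card - (j : ℕ)),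
            q ^ t) := by
        refine Finset.prod_congr rfl fun j _ => ?_
        rw [hcard j, factor_aux q hq]
    _ = (q - 1) ^ m * q ^ (m * (m - 1) / 2) *
        ∏ j : Fin m,
          ∑ t ∈ Finset.range
            ((Finset.univ.filter fun i : Fin m => (c i : ℕ) ≤ (i : ℕ) + (j : ℕ)).card - (j : ℕ)),
            q ^ t := by
        rw [Finset.prod_mul_distrib, Finset.prod_mul_distrib, Finset.prod_const,
          Finset.card_univ, Fintype.card_fin, Finset.prod_pow_eq_pow_sum]
        congr 2
        rw [Fin.sum_univ_eq_sum_range (fun i => i) m, Finset.sum_range_id]
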